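/- For any finite colouring of ℕ and any k ∈ ℕ there exist a, b, d ∈ ℕ such that the set {b·(a + i·d)^j : i, j ∈ {1, …, k}} is monochromatic. -/

import Mathlib

open Combinatorics

/-- Bergelson's partition theorem: for any finite colouring of the positive
integers and any `k`, there are `a, b, d` such that
`{b·(a+i·d)^j : i, j ∈ {1,…,k}}` is monochromatic. -/
theorem bergelson_partition (k r : ℕ) (c : ℕ → Fin r) :
    ∃ a b d : ℕ, 0 < a ∧ 0 < b ∧ 0 < d ∧ ∃ col : Fin r,
      ∀ i j : ℕ, 1 ≤ i → i ≤ k → 1 ≤ j → j ≤ k →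
        c (b * (a + i * d) ^ j) = col := by
  classical
  -- Step 1: Hales–Jewett dimension for alphabet `Fin (k+1)` and colours `Fin r`.
  obtain ⟨ι, _inst, hHJ⟩ :=
    Combinatorics.Line.exists_mono_in_high_dimension (Fin (k + 1)) (Fin r)
  -- Step 2: Gallai's theorem (`exists_mono_homothetic_copy`) applied to the colouring of
  -- `ι → ℕ` recording, for every exponent pattern `e : ι → Fin (k+1)`, the colour of
  -- `∏ t, (f t + 1) ^ (e t)`.
  set χ : (ι → ℕ) → ((ι → Fin (k + 1)) → Fin r) :=
    fun f e => c (∏ t, (f t + 1) ^ ((e t : ℕ))) with hχ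
  obtain ⟨a, ha, bb, C₀, hga⟩ :=
    Combinatorics.exists_mono_homothetic_copy
      (Fintype.piFinset (fun _ : ι => Finset.range (k + 1))) χ
  -- Step 3: Hales–Jewett applied to the uniformised pattern colouring `C₀`.
  obtain ⟨l, γ, hγ⟩ := hHJ C₀
  obtain ⟨t₀, ht₀⟩ := l.proper
  set F : Finset ι := Finset.univ.filter (fun t => l.idxFun t = none) with hF
  have ht₀F : t₀ ∈ F := by simp [hF, ht₀]
  set R : ℕ := ∏ t ∈ F.erase t₀, (bb t + 1) with hR
  set B : ℕ := ∏ t ∈ Finset.univ.filter (fun t => ¬l.idxFun t = none),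
      (bb t + 1) ^ (((l.idxFun t).getD 0 : Fin (k + 1)) : ℕ) with hB
  have hR0 : 0 < R := Finset.prod_pos (fun t _ => Nat.succ_pos _)
  have hB0 : 0 < B :=
    Finset.prod_pos (fun t _ => Nat.pow_pos (Nat.succ_pos _))
  refine ⟨R * (bb t₀ + 1), B, R * a, Nat.mul_pos hR0 (Nat.succ_pos _), hB0,
    Nat.mul_pos hR0 ha, γ, ?_⟩
  intro i j hi1 hik hj1 hjk
  have hj' : j < k + 1 := by omega
  set xj : Fin (k + 1) := ⟨j, hj'⟩ with hxj
  set si : ι → ℕ := fun t => if t = t₀ then i else 0 with hsi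
  have hsimem : si ∈ Fintype.piFinset (fun _ : ι => Finset.range (k + 1)) := by
    rw [Fintype.mem_piFinset]
    intro t
    rw [Finset.mem_range, hsi]
    dsimp only
    split <;> omega
  have h₁ := congrFun (hga si hsimem) (l xj)
  have h₂ : C₀ (l xj) = γ := hγ xj
  -- the base of the product
  have hbase : ∀ t, (a • si + bb) t + 1
      = if t = t₀ then a * i + bb t + 1 else bb t + 1 := by
    intro t
    simp only [Pi.add_apply, Pi.smul_apply, hsi, smul_eq_mul]
    split <;> simp
  -- exponents on active coordinates
  have hexp_active : ∀ t ∈ F, ((l xj t : Fin (k + 1)) : ℕ) = j := by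
    intro t ht
    have hnone : l.idxFun t = none := by
      simpa [hF] using ht
    rw [Line.apply_none l xj t hnone]
  -- the main product identity
  have hmain : (∏ t, ((a • si + bb) t + 1) ^ ((l xj t : Fin (k + 1)) : ℕ))
      = B * (R * (bb t₀ + 1) + i * (R * a)) ^ j := by
    rw [← Finset.prod_filter_mul_prod_filter_not Finset.univ
      (fun t => l.idxFun t = none)]
    have e1 : (∏ t ∈ Finset.univ.filter (fun t => l.idxFun t = none),
        ((a • si + bb) t + 1) ^ ((l xj t : Fin (k + 1)) : ℕ))
        = ((a * i + bb t₀ + 1) * R) ^ j := by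
      rw [Finset.prod_congr rfl (fun t ht => by
        rw [hbase t, hexp_active t (by simpa [hF] using ht)])]
      rw [Finset.prod_pow]
      congr 1
      rw [← Finset.mul_prod_erase _ _ (by simpa [hF] using ht₀F)]
      simp only [if_pos rfl]
      congr 1
      · refine Finset.prod_congr ?_ (fun t ht => by
          rw [if_neg (Finset.ne_of_mem_erase ht)])
        rw [hF]
    have e2 : (∏ t ∈ Finset.univ.filter (fun t => ¬l.idxFun t = none),
        ((a • si + bb) t + 1) ^ ((l xj t : Fin (k + 1)) : ℕ)) = B := by
      rw [hB]
      refine Finset.prod_congr rfl (fun t ht => ?_)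
      have hns : ¬l.idxFun t = none := by
        simpa using (Finset.mem_filter.mp ht).2
      obtain ⟨y, hy⟩ := Option.ne_none_iff_exists'.mp hns
      have htne : t ≠ t₀ := by
        intro h
        exact hns (h ▸ ht₀)
      rw [hbase t, if_neg htne, Line.apply_some hy, hy]
      simp
    rw [e1, e2]
    have : (a * i + bb t₀ + 1) * R = R * (bb t₀ + 1) + i * (R * a) := by ring
    rw [this, mul_comm]
  -- conclude
  have hfinal : χ (a • si + bb) (l xj)
      = c (B * (R * (bb t₀ + 1) + i * (R * a)) ^ j) := by
    rw [hχ]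
    exact congrArg c hmain
  rw [← hfinal]
  rw [h₁, h₂]
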